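/- Let C be a nonempty finite type, f : C → ℝ^n any function, γ a probability measure on C, P a Borel probability measure on ℝ^n, and d : ℝ^n → ℝ^n → ℝ≥0∞ a Borel-measurable cost. Then W_d(f#γ, P) — the infimum of ∫ d(y, x) dπ(y, x) over all probability measures π on ℝ^n × ℝ^n whose first marginal is the pushforward f#γ and whose second marginal is P — equals the infimum, over all Markov kernels κ from ℝ^n to C whose mixture ∫ κ(x, ·) dP(x) equals γ, of ∫_{ℝ^n} ∑_{c ∈ C} κ(x, {c}) · d(f c, x) dP(x). -/

import Mathlib

open MeasureTheory ProbabilityTheory ENNReal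

/-- Kantorovich cost `W_c(μ, ν)`: the infimum of `∫ c(x, y) dπ(x, y)` over all
probability measures `π` on the product whose first marginal is `μ` and whose
second marginal is `ν`. -/
noncomputable def Wcost {X Y : Type*} [MeasurableSpace X] [MeasurableSpace Y]
    (c : X → Y → ℝ≥0∞) (μ : Measure X) (ν : Measure Y) : ℝ≥0∞ :=
  ⨅ (π : Measure (X × Y)) (_ : IsProbabilityMeasure π)
    (_ : π.fst = μ) (_ : π.snd = ν), ∫⁻ p, c p.1 p.2 ∂π

set_option linter.unusedSectionVars false

section Aux
variable {C : Type*} [Fintype C] [Nonempty C] [MeasurableSpace C] [MeasurableSingletonClass C]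
variable {X : Type*} [MeasurableSpace X] [MeasurableSingletonClass X]

lemma measC_apply' (μ : Measure C) (s : Set C) :
    μ s = ∑ c, s.indicator (fun c => μ {c}) c := by
  classical
  have hs : MeasurableSet s := s.toFinite.measurableSet
  rw [← lintegral_indicator_one hs, lintegral_fintype]
  refine Finset.sum_congr rfl fun c _ => ?_
  by_cases h : c ∈ s <;> simp [Set.indicator, h]

lemma measC_univ' (μ : Measure C) : μ Set.univ = ∑ c, μ {c} := by
  rw [measC_apply' μ Set.univ]; simp

lemma sum_smul_dirac_apply (v : C → ℝ≥0∞) (s : Set C) :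
    (∑ c, v c • (Measure.dirac c : Measure C)) s = ∑ c, s.indicator v c := by
  classical
  have hs : MeasurableSet s := s.toFinite.measurableSet
  rw [Measure.finset_sum_apply]
  refine Finset.sum_congr rfl fun c _ => ?_
  by_cases h : c ∈ s <;> simp [Measure.dirac_apply' _ hs, Set.indicator, h]

lemma withDensity_finset_sum' {ι : Type*} (μ : Measure X) (s : Finset ι)
    {f : ι → X → ℝ≥0∞} (hf : ∀ i ∈ s, Measurable (f i)) :
    μ.withDensity (fun x => ∑ i ∈ s, f i x) = ∑ i ∈ s, μ.withDensity (f i) := by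
  classical
  induction s using Finset.induction with
  | empty => simp
  | insert _ _ hni ih =>
    rename_i a t
    rw [Finset.sum_insert hni]
    have : (fun x => ∑ i ∈ insert a t, f i x) = (f a + fun x => ∑ i ∈ t, f i x) := by
      ext x; simp [Finset.sum_insert hni]
    rw [this, withDensity_add_left (hf a (Finset.mem_insert_self a t)),
      ih (fun i hi => hf i (Finset.mem_insert_of_mem hi))]

lemma lemB (f : C → X) (γ : Measure C) [IsProbabilityMeasure γ]
    (P : Measure X) [IsProbabilityMeasure P]
    (d : X → X → ℝ≥0∞) (hd : Measurable (Function.uncurry d))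
    (π : Measure (X × X)) [IsProbabilityMeasure π]
    (hfst : π.fst = γ.map f) (hsnd : π.snd = P) :
    (⨅ (κ : Kernel X C) (_ : IsMarkovKernel κ)
        (_ : P.bind (fun x => κ x) = γ),
        ∫⁻ x, ∑ c, κ x {c} * d (f c) x ∂P) ≤ ∫⁻ p, d p.1 p.2 ∂π := by
  classical
  have hf : Measurable f := Measurable.of_discrete
  have hdc : ∀ c : C, Measurable fun x => d (f c) x :=
    fun c => hd.comp (measurable_const.prodMk measurable_id)
  have hdsnd : ∀ c : C, Measurable fun p : X × X => d (f c) p.2 :=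
    fun c => (hdc c).comp measurable_snd
  set D : X → ℝ≥0∞ := fun y => ∑ c, γ {c} * ({f c} : Set X).indicator 1 y with hD
  set w : C → X → ℝ≥0∞ :=
    fun c y => γ {c} * ({f c} : Set X).indicator 1 y / D y with hw
  have hDmeas : Measurable D :=
    Finset.measurable_sum _ fun c _ =>
      measurable_const.mul (measurable_one.indicator (measurableSet_singleton _))
  have hwmeas : ∀ c, Measurable (w c) := fun c =>
    (measurable_const.mul (measurable_one.indicator (measurableSet_singleton _))).div hDmeas
  have hterm_le : ∀ (c : C) (y : X), γ {c} * ({f c} : Set X).indicator 1 y ≤ D y := by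
    intro c y
    exact Finset.single_le_sum (f := fun c => γ {c} * ({f c} : Set X).indicator 1 y)
      (fun _ _ => zero_le) (Finset.mem_univ c)
  have hD_ne_top : ∀ y, D y ≠ ⊤ := by
    intro y
    refine (ENNReal.sum_lt_top.2 fun c _ => ?_).ne
    calc γ {c} * ({f c} : Set X).indicator 1 y ≤ 1 * 1 := by
          refine mul_le_mul' prob_le_one ?_
          by_cases h : y ∈ ({f c} : Set X) <;> simp [Set.indicator, h]
      _ < ⊤ := by simp
  have hw_le_one : ∀ c y, w c y ≤ 1 :=
    fun c y => ENNReal.div_le_of_le_mul (by simpa using hterm_le c y)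
  have hw_sum : ∀ y, D y ≠ 0 → ∑ c, w c y = 1 := by
    intro y hy
    rw [hw]
    simp only [div_eq_mul_inv]
    rw [← Finset.sum_mul]
    have hDy : (∑ i : C, γ {i} * ({f i} : Set X).indicator 1 y) = D y := rfl
    rw [hDy]
    exact ENNReal.mul_inv_cancel hy (hD_ne_top y)
  have hw_eqf : ∀ c y, w c y ≠ 0 → f c = y := by
    intro c y h0
    by_contra hne
    apply h0
    rw [hw]
    simp [Set.indicator, Ne.symm hne]
  -- a.e. D p.1 ≠ 0
  have hDset : MeasurableSet {y | D y = 0} := hDmeas (measurableSet_singleton 0)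
  have hDae : ∀ᵐ p ∂π, D p.1 ≠ 0 := by
    have h0 : π.fst {y | D y = 0} = 0 := by
      rw [hfst, Measure.map_apply hf hDset, measC_apply' γ (f ⁻¹' {y | D y = 0})]
      refine Finset.sum_eq_zero fun c _ => ?_
      by_cases hc : D (f c) = 0
      · have hγc : γ {c} = 0 := by
          have h := hterm_le c (f c)
          rw [hc] at h
          simpa using h
        simp [Set.indicator, hc, hγc]
      · simp [Set.indicator, hc]
    have h1 : π (Prod.fst ⁻¹' {y | D y = 0}) = 0 := by
      rw [← Measure.fst_apply hDset]; exact h0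
    rw [ae_iff]
    convert h1 using 2
    ext p; simp
  set ν : C → Measure X := fun c => (π.withDensity fun p => w c p.1).map Prod.snd with hν
  have hwfst : ∀ c, Measurable fun p : X × X => w c p.1 :=
    fun c => (hwmeas c).comp measurable_fst
  have hν_apply : ∀ c (s : Set X), MeasurableSet s →
      ν c s = ∫⁻ p in Prod.snd ⁻¹' s, w c p.1 ∂π := by
    intro c s hs
    rw [hν]
    simp only
    rw [Measure.map_apply measurable_snd hs, withDensity_apply _ (measurable_snd hs)]
  have hν_le : ∀ c, ν c ≤ P := by
    intro c
    refine Measure.le_iff.2 fun s hs => ?_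
    rw [hν_apply c s hs]
    calc ∫⁻ p in Prod.snd ⁻¹' s, w c p.1 ∂π ≤ ∫⁻ _ in Prod.snd ⁻¹' s, 1 ∂π :=
          lintegral_mono fun p => hw_le_one c p.1
      _ = π (Prod.snd ⁻¹' s) := setLIntegral_one _
      _ = P s := by rw [← Measure.snd_apply hs, hsnd]
  have hν_fin : ∀ c, IsFiniteMeasure (ν c) := fun c => isFiniteMeasure_of_le P (hν_le c)
  set g : C → X → ℝ≥0∞ := fun c => (ν c).rnDeriv P with hg
  have hgmeas : ∀ c, Measurable (g c) := fun c => Measure.measurable_rnDeriv _ _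
  have hgwd : ∀ c, P.withDensity (g c) = ν c := by
    intro c
    haveI := hν_fin c
    exact Measure.withDensity_rnDeriv_eq _ _ (hν_le c).absolutelyContinuous
  have hν_sum : ∑ c, ν c = P := by
    ext s hs
    rw [Measure.finset_sum_apply, Finset.sum_congr rfl fun c _ => hν_apply c s hs,
      ← lintegral_finset_sum _ fun c _ => hwfst c]
    have h1 : ∫⁻ p in Prod.snd ⁻¹' s, (∑ c, w c p.1) ∂π
        = ∫⁻ _ in Prod.snd ⁻¹' s, 1 ∂π := by
      refine lintegral_congr_ae ?_
      filter_upwards [ae_restrict_of_ae hDae] with p hp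
      exact hw_sum p.1 hp
    rw [h1, setLIntegral_one, ← Measure.snd_apply hs, hsnd]
  have hgsum_ae : (fun x => ∑ c, g c x) =ᵐ[P] fun _ => 1 := by
    have h1 : P.withDensity (fun x => ∑ c, g c x) = P := by
      rw [withDensity_finset_sum' P Finset.univ fun c _ => hgmeas c,
        Finset.sum_congr rfl fun c _ => hgwd c, hν_sum]
    have h2 := Measure.rnDeriv_withDensity P (Finset.measurable_sum Finset.univ fun c _ => hgmeas c)
    rw [h1] at h2
    exact h2.symm.trans (Measure.rnDeriv_self P)
  -- the kernel
  set t : X → ℝ≥0∞ := fun x => ∑ c, g c x with ht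
  have htmeas : Measurable t := Finset.measurable_sum _ fun c _ => hgmeas c
  set u : C → X → ℝ≥0∞ :=
    fun c x => if t x = 1 then g c x else if c = Classical.arbitrary C then 1 else 0 with hu
  have humeas : ∀ c, Measurable (u c) := fun c =>
    Measurable.ite (htmeas (measurableSet_singleton 1)) (hgmeas c) measurable_const
  have hu_sum : ∀ x, ∑ c, u c x = 1 := by
    intro x
    by_cases hx : t x = 1
    · have h2 : ∀ c, u c x = g c x := fun c => if_pos hx
      rw [Finset.sum_congr rfl fun c _ => h2 c]
      exact hx
    · have h2 : ∀ c, u c x = if c = Classical.arbitrary C then 1 else 0 := fun c => if_neg hx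
      rw [Finset.sum_congr rfl fun c _ => h2 c]
      simp
  have hu_ae : ∀ᵐ x ∂P, ∀ c, u c x = g c x := by
    filter_upwards [hgsum_ae] with x hx
    intro c
    exact if_pos (by simpa using hx)
  set κm : X → Measure C := fun x => ∑ c, u c x • Measure.dirac c with hκm
  have hκm_meas : Measurable κm := by
    refine Measure.measurable_of_measurable_coe _ fun s hs => ?_
    simp only [hκm]
    have : ∀ x, (∑ c, u c x • (Measure.dirac c : Measure C)) s
        = ∑ c, s.indicator (fun c => u c x) c := fun x => sum_smul_dirac_apply _ s
    simp_rw [this]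
    refine Finset.measurable_sum _ fun c _ => ?_
    by_cases hc : c ∈ s <;> simp [Set.indicator, hc, humeas c, measurable_const]
  set κ : Kernel X C := ⟨κm, hκm_meas⟩ with hκ
  have hκ_singleton : ∀ x c, κ x {c} = u c x := by
    intro x c
    have h1 : κ x {c} = ∑ c', ({c} : Set C).indicator (fun c' => u c' x) c' :=
      sum_smul_dirac_apply _ _
    rw [h1, Finset.sum_eq_single c
      (fun c' _ hne => Set.indicator_of_notMem (by simp [hne]) _)
      (fun h => absurd (Finset.mem_univ c) h)]
    exact Set.indicator_of_mem (by simp) _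
  haveI hmk : IsMarkovKernel κ := by
    refine ⟨fun x => ⟨?_⟩⟩
    rw [measC_univ' (κ x), Finset.sum_congr rfl fun c _ => hκ_singleton x c]
    exact hu_sum x
  -- computing ∫⁻ x, g c x ∂P
  have hlint_g : ∀ c : C, ∫⁻ x, g c x ∂P = ∑ c', w c (f c') * γ {c'} := by
    intro c
    have h1 : ∫⁻ x, g c x ∂P = ν c Set.univ := by
      rw [← hgwd c, withDensity_apply _ MeasurableSet.univ, Measure.restrict_univ]
    rw [h1, hν_apply c Set.univ MeasurableSet.univ]
    have h2 : (Prod.snd : X × X → X) ⁻¹' (Set.univ : Set X) = Set.univ := Set.preimage_univ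
    rw [h2, Measure.restrict_univ]
    have h3 : ∫⁻ p, w c p.1 ∂π = ∫⁻ y, w c y ∂(π.map Prod.fst) :=
      (lintegral_map (hwmeas c) measurable_fst).symm
    have h4 : π.map Prod.fst = γ.map f := hfst
    rw [h3, h4, lintegral_map (hwmeas c) hf, lintegral_fintype]
  -- the key finite computation
  have hkey : ∀ c : C, ∑ c', w c (f c') * γ {c'} = γ {c} := by
    intro c
    have hstep : ∀ c' : C, w c (f c') * γ {c'}
        = γ {c} / D (f c) * (γ {c'} * ({f c'} : Set X).indicator 1 (f c)) := by
      intro c'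
      by_cases h : f c' = f c
      · have hi1 : ({f c} : Set X).indicator (1 : X → ℝ≥0∞) (f c') = 1 :=
          Set.indicator_of_mem (by simp [h]) _
        have hi2 : ({f c'} : Set X).indicator (1 : X → ℝ≥0∞) (f c) = 1 :=
          Set.indicator_of_mem (by simp [h]) _
        rw [hw]
        simp only
        rw [hi1, hi2, h, mul_one, mul_one]
      · have hi1 : ({f c} : Set X).indicator (1 : X → ℝ≥0∞) (f c') = 0 :=
          Set.indicator_of_notMem (by simp [h]) _
        have hi2 : ({f c'} : Set X).indicator (1 : X → ℝ≥0∞) (f c) = 0 :=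
          Set.indicator_of_notMem
            (by simp only [Set.mem_singleton_iff]; exact fun hh => h hh.symm) _
        rw [hw]
        simp only
        rw [hi1, hi2]
        simp
    rw [Finset.sum_congr rfl fun c' _ => hstep c', ← Finset.mul_sum]
    have hsum : (∑ c', γ {c'} * ({f c'} : Set X).indicator 1 (f c)) = D (f c) := rfl
    rw [hsum]
    by_cases hb : D (f c) = 0
    · have hγc : γ {c} = 0 := by
        have h := hterm_le c (f c)
        rw [hb] at h
        simpa using h
      simp [hb, hγc]
    · exact ENNReal.div_mul_cancel hb (hD_ne_top _)
  have hbind : P.bind (fun x => κ x) = γ := by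
    rw [Measure.ext_iff_singleton]
    intro c
    rw [Measure.bind_apply (measurableSet_singleton c) κ.measurable.aemeasurable]
    calc ∫⁻ x, κ x {c} ∂P = ∫⁻ x, u c x ∂P := by
          rw [lintegral_congr fun x => hκ_singleton x c]
      _ = ∫⁻ x, g c x ∂P := by
          refine lintegral_congr_ae ?_
          filter_upwards [hu_ae] with x hx using hx c
      _ = ∑ c', w c (f c') * γ {c'} := hlint_g c
      _ = γ {c} := hkey c
  -- cost identity
  have hcost : ∫⁻ x, ∑ c, κ x {c} * d (f c) x ∂P = ∫⁻ p, d p.1 p.2 ∂π := by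
    calc ∫⁻ x, ∑ c, κ x {c} * d (f c) x ∂P
        = ∫⁻ x, ∑ c, g c x * d (f c) x ∂P := by
          refine lintegral_congr_ae ?_
          filter_upwards [hu_ae] with x hx
          exact Finset.sum_congr rfl fun c _ => by rw [hκ_singleton x c, hx c]
      _ = ∑ c, ∫⁻ x, g c x * d (f c) x ∂P :=
          lintegral_finset_sum _ fun c _ => (hgmeas c).mul (hdc c)
      _ = ∑ c, ∫⁻ p, w c p.1 * d (f c) p.2 ∂π := by
          refine Finset.sum_congr rfl fun c _ => ?_
          have h5 : ∫⁻ x, d (f c) x ∂(P.withDensity (g c)) = ∫⁻ x, g c x * d (f c) x ∂P := by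
            rw [lintegral_withDensity_eq_lintegral_mul P (hgmeas c) (hdc c)]
            rfl
          rw [← h5, hgwd c, hν]
          simp only
          rw [lintegral_map (hdc c) measurable_snd]
          have h6 : ∫⁻ p, d (f c) p.2 ∂(π.withDensity fun p => w c p.1)
              = ∫⁻ p, w c p.1 * d (f c) p.2 ∂π := by
            rw [lintegral_withDensity_eq_lintegral_mul π (hwfst c) (hdsnd c)]
            rfl
          exact h6
      _ = ∫⁻ p, ∑ c, w c p.1 * d (f c) p.2 ∂π :=
          (lintegral_finset_sum _ fun c _ => (hwfst c).mul (hdsnd c)).symm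
      _ = ∫⁻ p, d p.1 p.2 ∂π := by
          refine lintegral_congr_ae ?_
          filter_upwards [hDae] with p hp
          have hterm : ∀ c : C, w c p.1 * d (f c) p.2 = w c p.1 * d p.1 p.2 := by
            intro c
            by_cases h0 : w c p.1 = 0
            · rw [h0, zero_mul, zero_mul]
            · rw [hw_eqf c p.1 h0]
          rw [Finset.sum_congr rfl fun c _ => hterm c, ← Finset.sum_mul, hw_sum p.1 hp, one_mul]
  exact iInf_le_of_le κ (iInf_le_of_le hmk (iInf_le_of_le hbind (le_of_eq hcost)))

lemma lemA (f : C → X) (γ : Measure C) [IsProbabilityMeasure γ]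
    (P : Measure X) [IsProbabilityMeasure P]
    (d : X → X → ℝ≥0∞) (hd : Measurable (Function.uncurry d))
    (κ : Kernel X C) [IsMarkovKernel κ] (hκ : P.bind (fun x => κ x) = γ) :
    (⨅ (π : Measure (X × X)) (_ : IsProbabilityMeasure π)
      (_ : π.fst = γ.map f) (_ : π.snd = P), ∫⁻ p, d p.1 p.2 ∂π)
      ≤ ∫⁻ x, ∑ c, κ x {c} * d (f c) x ∂P := by
  classical
  have hgc : ∀ c : C, Measurable fun x => κ x {c} :=
    fun c => κ.measurable_coe (measurableSet_singleton c)
  have hdc : ∀ c : C, Measurable fun x => d (f c) x :=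
    fun c => hd.comp (measurable_const.prodMk measurable_id)
  have hd' : Measurable fun p : X × X => d p.1 p.2 := hd
  set μc : C → Measure X := fun c => P.withDensity fun x => κ x {c} with hμc
  have hmapm : ∀ c : C, Measurable fun x : X => (f c, x) :=
    fun c => measurable_const.prodMk measurable_id
  set π : Measure (X × X) := ∑ c, (μc c).map (fun x => (f c, x)) with hπ
  have hμc_univ : ∀ c, μc c Set.univ = γ {c} := by
    intro c
    rw [hμc]
    simp only
    rw [withDensity_apply _ MeasurableSet.univ, Measure.restrict_univ,
      ← Measure.bind_apply (measurableSet_singleton c) κ.measurable.aemeasurable, hκ]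
  have hκsum : ∀ x, ∑ c, κ x {c} = 1 := by
    intro x
    rw [← measC_univ' (κ x)]
    exact measure_univ
  have hsnd : π.snd = P := by
    ext s hs
    rw [Measure.snd_apply hs, hπ, Measure.finset_sum_apply]
    have h1 : ∀ c : C, ((μc c).map fun x => (f c, x)) (Prod.snd ⁻¹' s) = μc c s := by
      intro c
      rw [Measure.map_apply (hmapm c) (measurable_snd hs)]
      rfl
    rw [Finset.sum_congr rfl fun c _ => h1 c,
      Finset.sum_congr rfl fun c _ => withDensity_apply (fun x => κ x {c}) hs,
      ← lintegral_finset_sum _ (fun c _ => hgc c)]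
    simp_rw [hκsum]
    rw [setLIntegral_one]
  have hfst : π.fst = γ.map f := by
    ext s hs
    rw [Measure.fst_apply hs, hπ, Measure.finset_sum_apply,
      Measure.map_apply (Measurable.of_discrete) hs, measC_apply' γ (f ⁻¹' s)]
    refine Finset.sum_congr rfl fun c _ => ?_
    rw [Measure.map_apply (hmapm c) (measurable_fst hs)]
    by_cases h : f c ∈ s
    · have : (fun x : X => (f c, x)) ⁻¹' (Prod.fst ⁻¹' s) = Set.univ := by
        ext x; simp [h]
      rw [this, hμc_univ c]
      simp [Set.indicator, h]
    · have : (fun x : X => (f c, x)) ⁻¹' (Prod.fst ⁻¹' s) = ∅ := by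
        ext x; simp [h]
      rw [this]
      simp [Set.indicator, h]
  have hprob : IsProbabilityMeasure π := by
    constructor
    rw [← Measure.snd_univ, hsnd]
    exact measure_univ
  have hcost : ∫⁻ p, d p.1 p.2 ∂π = ∫⁻ x, ∑ c, κ x {c} * d (f c) x ∂P := by
    rw [hπ, lintegral_finset_sum_measure, lintegral_finset_sum _ (f := fun c x => κ x {c} * d (f c) x) (fun c _ => (hgc c).mul (hdc c))]
    refine Finset.sum_congr rfl fun c _ => ?_
    rw [lintegral_map hd' (hmapm c), hμc]
    simp only
    rw [lintegral_withDensity_eq_lintegral_mul P (hgc c) (hdc c)]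
    rfl
  calc (⨅ (π : Measure (X × X)) (_ : IsProbabilityMeasure π)
      (_ : π.fst = γ.map f) (_ : π.snd = P), ∫⁻ p, d p.1 p.2 ∂π) ≤ ∫⁻ p, d p.1 p.2 ∂π :=
        iInf_le_of_le π (iInf_le_of_le hprob (iInf_le_of_le hfst (iInf_le_of_le hsnd le_rfl)))
    _ = ∫⁻ x, ∑ c, κ x {c} * d (f c) x ∂P := hcost


end Aux

/-- **Eq. (51), key identity in the proof of Theorem 1**: for a nonempty finite type `C`,
a decoder `f : C → ℝ^n`, a probability measure `γ` on `C`, a Borel probability measure `P`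
on `ℝ^n` and a Borel-measurable cost `d`, the Wasserstein cost `W_d(f#γ, P)` equals the
infimum, over Markov kernels `κ` from `ℝ^n` to `C` whose mixture under `P` is `γ`, of
`∫ ∑_{c} κ(x, {c}) · d(f c, x) dP(x)`. -/
theorem stmt2 {n : ℕ} {C : Type*} [Fintype C] [Nonempty C]
    [MeasurableSpace C] [DiscreteMeasurableSpace C]
    (f : C → EuclideanSpace ℝ (Fin n))
    (γ : Measure C) [IsProbabilityMeasure γ]
    (P : Measure (EuclideanSpace ℝ (Fin n))) [IsProbabilityMeasure P]
    (d : EuclideanSpace ℝ (Fin n) → EuclideanSpace ℝ (Fin n) → ℝ≥0∞)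
    (hd : Measurable (Function.uncurry d)) :
    Wcost d (γ.map f) P =
      ⨅ (κ : Kernel (EuclideanSpace ℝ (Fin n)) C) (_ : IsMarkovKernel κ)
        (_ : P.bind (fun x => κ x) = γ),
        ∫⁻ x, ∑ c, κ x {c} * d (f c) x ∂P := by
  apply le_antisymm
  · refine le_iInf fun κ => le_iInf fun hκm => le_iInf fun hb => ?_
    haveI := hκm
    exact lemA f γ P d hd κ hb
  · rw [Wcost]
    refine le_iInf fun π => le_iInf fun hπ => le_iInf fun h1 => le_iInf fun h2 => ?_
    haveI := hπ
    exact lemB f γ P d hd π h1 h2
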